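/- Let t(x) = x^(-p) * (1-x)^(-q) with p > 0 and q > 0. Then t is strictly convex on the open interval (0,1). -/

import Mathlib

open Real Set

lemma aux_exp_comp {s : Set ℝ} {f : ℝ → ℝ} (hf : StrictConvexOn ℝ s f) :
    StrictConvexOn ℝ s (fun x => Real.exp (f x)) := by
  refine ⟨hf.1, fun x hx y hy hxy a b ha hb hab => ?_⟩
  calc Real.exp (f (a • x + b • y)) < Real.exp (a * f x + b * f y) := by
        apply Real.exp_lt_exp.2
        have := hf.2 hx hy hxy ha hb hab
        simpa [smul_eq_mul] using this
    _ ≤ a * Real.exp (f x) + b * Real.exp (f y) := by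
        have := convexOn_exp.2 (Set.mem_univ (f x)) (Set.mem_univ (f y)) ha.le hb.le hab
        simpa [smul_eq_mul] using this
    _ = a • Real.exp (f x) + b • Real.exp (f y) := by simp [smul_eq_mul]

lemma aux1 (c : ℝ) (hc : 0 < c) :
    StrictConvexOn ℝ (Set.Ioo (0:ℝ) 1) (fun x => -(c * Real.log x)) := by
  refine ⟨convex_Ioo _ _, fun x hx y hy hxy a b ha hb hab => ?_⟩
  have h := strictConcaveOn_log_Ioi.2 (Set.mem_Ioi.2 hx.1) (Set.mem_Ioi.2 hy.1) hxy ha hb hab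
  simp only [smul_eq_mul] at h ⊢
  nlinarith [mul_lt_mul_of_pos_left h hc]

lemma aux2 (c : ℝ) (hc : 0 < c) :
    StrictConvexOn ℝ (Set.Ioo (0:ℝ) 1) (fun x => -(c * Real.log (1 - x))) := by
  refine ⟨convex_Ioo _ _, fun x hx y hy hxy a b ha hb hab => ?_⟩
  have hx' : (0:ℝ) < 1 - x := by linarith [hx.2]
  have hy' : (0:ℝ) < 1 - y := by linarith [hy.2]
  have hne : (1 - x) ≠ (1 - y) := by intro h; apply hxy; linarith
  have h := strictConcaveOn_log_Ioi.2 (Set.mem_Ioi.2 hx') (Set.mem_Ioi.2 hy') hne ha hb hab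
  simp only [smul_eq_mul] at h ⊢
  have heq : a * (1 - x) + b * (1 - y) = 1 - (a * x + b * y) := by ring_nf; linarith
  rw [heq] at h
  nlinarith [mul_lt_mul_of_pos_left h hc]

/-- t(x) = x^(-p) (1-x)^(-q) with p, q > 0 is strictly convex on (0,1). -/
theorem stmt_1 (p q : ℝ) (hp : 0 < p) (hq : 0 < q) :
    StrictConvexOn ℝ (Set.Ioo (0:ℝ) 1)
      (fun x : ℝ => x ^ (-p) * (1 - x) ^ (-q)) := by
  have h : StrictConvexOn ℝ (Set.Ioo (0:ℝ) 1)
      (fun x => Real.exp (-(p * Real.log x) + -(q * Real.log (1 - x)))) :=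
    aux_exp_comp ((aux1 p hp).add (aux2 q hq))
  refine h.congr fun x hx => ?_
  have hx0 : (0:ℝ) < x := hx.1
  have hx1 : (0:ℝ) < 1 - x := by linarith [hx.2]
  beta_reduce
  rw [Real.exp_add, Real.rpow_def_of_pos hx0, Real.rpow_def_of_pos hx1]
  ring_nf
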